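/- Let H be a Hilbert space and let F, H₀ ∈ B(H) be such that [H₀, F], [H₀, F*], H₀(F² − 1), and H₀(F* − F) are all compact. Let C = φ((F+F*)/2) with φ the clamp function to [−1,1] applied by continuous functional calculus. Then H₀(C − F) and H₀(C² − 1) are compact, and [H₀, C] is compact. -/
import Mathlib

private lemma stmt16_aux_real (δ s d : ℝ) (hδ : 0 < δ) (hs : 0 ≤ s) (hd : 4*s^2 ≤ d) :
    s*δ/(d+δ) ≤ Real.sqrt δ/4 := by
  have hd0 : 0 ≤ d := le_trans (by positivity) hd
  have h1 : 0 < d + δ := by linarith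
  rw [div_le_div_iff₀ h1 (by norm_num)]
  have h2 := Real.sq_sqrt hδ.le
  have h3 := Real.sqrt_nonneg δ
  nlinarith [mul_nonneg h3 (sq_nonneg (2*s - Real.sqrt δ)), mul_nonneg h3 (sub_nonneg.2 hd)]

section Op

variable {H : Type*} [NormedAddCommGroup H] [InnerProductSpace ℂ H] [CompleteSpace H]

private lemma stmt16_comm (H₀ A : H →L[ℂ] H) (hA : IsSelfAdjoint A)
    (hcomm : IsCompactOperator (H₀ * A - A * H₀ : H →L[ℂ] H))
    (f : ℝ → ℝ) (hf : Continuous f) :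
    IsCompactOperator (H₀ * cfc f A - cfc f A * H₀ : H →L[ℂ] H) := by
  have hmul : ∀ X Y : H →L[ℂ] H, IsCompactOperator (H₀ * X - X * H₀ : H →L[ℂ] H) →
      IsCompactOperator (H₀ * Y - Y * H₀ : H →L[ℂ] H) →
      IsCompactOperator (H₀ * (X*Y) - (X*Y) * H₀ : H →L[ℂ] H) := by
    intro X Y hX hY
    have key : H₀*(X*Y) - (X*Y)*H₀ = (H₀*X - X*H₀)*Y + X*(H₀*Y - Y*H₀) := by noncomm_ring
    rw [key]
    exact (hX.comp_clm Y).add (hY.clm_comp X)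
  have hpoly : ∀ q : Polynomial ℝ,
      IsCompactOperator
        (H₀ * (Polynomial.aeval A q) - (Polynomial.aeval A q) * H₀ : H →L[ℂ] H) := by
    intro q
    induction q using Polynomial.induction_on with
    | C r =>
      have key : H₀ * (Polynomial.aeval A (Polynomial.C r))
          - (Polynomial.aeval A (Polynomial.C r)) * H₀ = 0 := by
        rw [Polynomial.aeval_C, ← Algebra.commutes r H₀, sub_self]
      rw [key]
      exact isCompactOperator_zero
    | add p q hp hq =>
      have key : H₀ * (Polynomial.aeval A (p + q)) - (Polynomial.aeval A (p + q)) * H₀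
          = (H₀ * Polynomial.aeval A p - Polynomial.aeval A p * H₀)
            + (H₀ * Polynomial.aeval A q - Polynomial.aeval A q * H₀) := by
        rw [map_add]; noncomm_ring
      rw [key]
      exact hp.add hq
    | monomial n r ih =>
      have key : (Polynomial.aeval A (Polynomial.C r * Polynomial.X ^ (n + 1)) : H →L[ℂ] H)
          = (Polynomial.aeval A (Polynomial.C r * Polynomial.X ^ n)) * A := by
        simp only [map_mul, map_pow, Polynomial.aeval_X, Polynomial.aeval_C, pow_succ]
        noncomm_ring
      rw [key]
      exact hmul _ _ ih hcomm
  have hclosed : IsClosed {X : H →L[ℂ] H | IsCompactOperator (H₀ * X - X * H₀ : H →L[ℂ] H)} := by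
    have hcont : Continuous fun X : H →L[ℂ] H => H₀ * X - X * H₀ :=
      (continuous_const.mul continuous_id).sub (continuous_id.mul continuous_const)
    exact isClosed_setOf_isCompactOperator.preimage hcont
  suffices hmem : cfc f A ∈
      {X : H →L[ℂ] H | IsCompactOperator (H₀ * X - X * H₀ : H →L[ℂ] H)} from hmem
  rw [← hclosed.closure_eq]
  refine Metric.mem_closure_iff.2 fun ε hε => ?_
  set M := ‖A‖ * ‖(1 : H →L[ℂ] H)‖ with hM
  have hM0 : 0 ≤ M := by positivity
  obtain ⟨q, hq⟩ := exists_polynomial_near_of_continuousOn (-M) M f hf.continuousOn (ε/2)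
    (by positivity)
  refine ⟨Polynomial.aeval A q, hpoly q, ?_⟩
  rw [dist_eq_norm, ← cfc_polynomial q A, ← cfc_sub f q.eval A]
  have hb : ‖cfc (fun x => f x - q.eval x) A‖ ≤ ε/2 := by
    refine norm_cfc_le (by positivity) fun x hx => ?_
    have hxM : |x| ≤ M := by
      simpa [Real.norm_eq_abs] using spectrum.norm_le_norm_mul_of_mem hx
    have hxI : x ∈ Set.Icc (-M) M := by
      rcases abs_le.1 hxM with ⟨h1, h2⟩; exact ⟨h1, h2⟩
    have := hq x hxI
    rw [Real.norm_eq_abs, abs_sub_comm]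
    linarith
  linarith

private lemma stmt16_left (H₀ A : H →L[ℂ] H) (hA : IsSelfAdjoint A)
    (hcomm : IsCompactOperator (H₀ * A - A * H₀ : H →L[ℂ] H))
    (hsq : IsCompactOperator (H₀ * (A*A - 1) : H →L[ℂ] H)) :
    IsCompactOperator
      (H₀ * (cfc (fun t : ℝ => max (-1) (min t 1)) A - A) : H →L[ℂ] H) := by
  set ψ : ℝ → ℝ := fun t => max (-1) (min t 1) - t with hψ
  have hψc : Continuous ψ := by
    apply Continuous.sub _ continuous_id
    exact continuous_const.max (continuous_id.min continuous_const)
  have hψ4 : ∀ x : ℝ, 4*(ψ x)^2 ≤ ((x^2-1)^2) := by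
    intro x
    rcases le_or_gt x (-1) with hx | hx
    · have h1 : min x 1 = x := min_eq_left (by linarith)
      have h2 : max (-1) x = -1 := max_eq_left (by linarith)
      simp only [hψ, h1, h2]
      nlinarith
    · rcases le_or_gt x 1 with hx' | hx'
      · have h1 : min x 1 = x := min_eq_left hx'
        have h2 : max (-1) x = x := max_eq_right (by linarith)
        simp only [hψ, h1, h2]
        nlinarith
      · have h1 : min x 1 = 1 := min_eq_right hx'.le
        have h2 : max (-1) (1:ℝ) = 1 := max_eq_right (by norm_num)
        simp only [hψ, h1, h2]
        nlinarith
  have hrw : cfc (fun t : ℝ => max (-1) (min t 1)) A - A = cfc ψ A := by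
    have h := cfc_sub (fun t : ℝ => max (-1) (min t 1)) (id : ℝ → ℝ) A
      (by fun_prop) (by fun_prop)
    rw [cfc_id ℝ A] at h
    exact h.symm
  rw [hrw]
  have hclosed : IsClosed {X : H →L[ℂ] H | IsCompactOperator (H₀ * X : H →L[ℂ] H)} := by
    have hcont : Continuous fun X : H →L[ℂ] H => H₀ * X := continuous_const.mul continuous_id
    exact isClosed_setOf_isCompactOperator.preimage hcont
  suffices hmem : cfc ψ A ∈ {X : H →L[ℂ] H | IsCompactOperator (H₀ * X : H →L[ℂ] H)} from hmem
  rw [← hclosed.closure_eq]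
  refine Metric.mem_closure_iff.2 fun ε hε => ?_
  set δ := ε^2 with hδdef
  have hδ : 0 < δ := by positivity
  set g : ℝ → ℝ := fun t => ψ t * (t^2-1) / ((t^2-1)^2 + δ) with hg
  have hgc : Continuous g := by
    apply Continuous.div (hψc.mul (by fun_prop)) (by fun_prop)
    intro t; positivity
  refine ⟨cfc g A * (A*A - 1), ?_, ?_⟩
  · show IsCompactOperator (H₀ * (cfc g A * (A*A - 1)) : H →L[ℂ] H)
    have key : H₀ * (cfc g A * (A*A-1))
        = (H₀ * cfc g A - cfc g A * H₀)*(A*A-1) + cfc g A * (H₀*(A*A-1)) := by noncomm_ring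
    rw [key]
    exact ((stmt16_comm H₀ A hA hcomm g hgc).comp_clm _).add (hsq.clm_comp _)
  · have hsq1 : A*A - 1 = cfc (fun t : ℝ => t^2 - 1) A := by
      rw [cfc_sub (fun t : ℝ => t^2) (fun _ => (1:ℝ)) A (by fun_prop) (by fun_prop),
        cfc_pow_id A 2, cfc_const 1 A, map_one, sq]
    have h2 : cfc g A * (A*A - 1) = cfc (fun t => g t * (t^2 - 1)) A := by
      rw [hsq1, ← cfc_mul g (fun t : ℝ => t^2 - 1) A (by fun_prop) (by fun_prop)]
    rw [dist_eq_norm, h2, ← cfc_sub ψ (fun t => g t * (t^2-1)) A (by fun_prop) (by fun_prop)]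
    have hb : ‖cfc (fun x => ψ x - g x * (x^2-1)) A‖ ≤ ε/4 := by
      refine norm_cfc_le (by positivity) fun x hx => ?_
      have hD : (0:ℝ) < (x^2-1)^2 + δ := by positivity
      have heq : ψ x - g x * (x^2-1) = ψ x * δ / ((x^2-1)^2 + δ) := by
        rw [hg]; field_simp; ring
      rw [Real.norm_eq_abs, heq, abs_div, abs_of_pos hD, abs_mul, abs_of_pos hδ]
      have haux := stmt16_aux_real δ |ψ x| ((x^2-1)^2) hδ (abs_nonneg _)
        (by rw [sq_abs]; exact hψ4 x)
      have hsqrt : Real.sqrt δ = ε := by rw [hδdef, Real.sqrt_sq hε.le]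
      rw [hsqrt] at haux
      exact haux
    linarith

end Op

theorem stmt16
    {H : Type*} [NormedAddCommGroup H] [InnerProductSpace ℂ H] [CompleteSpace H]
    (F H₀ : H →L[ℂ] H)
    (h1 : IsCompactOperator (H₀ * F - F * H₀ : H →L[ℂ] H))
    (h2 : IsCompactOperator (H₀ * star F - star F * H₀ : H →L[ℂ] H))
    (h3 : IsCompactOperator (H₀ * (F * F - 1) : H →L[ℂ] H))
    (h4 : IsCompactOperator (H₀ * (star F - F) : H →L[ℂ] H)) :
    IsCompactOperator
        (H₀ * (cfc (fun t : ℝ => max (-1) (min t 1)) ((2 : ℂ)⁻¹ • (F + star F)) - F)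
          : H →L[ℂ] H) ∧
    IsCompactOperator
        (H₀ * (cfc (fun t : ℝ => max (-1) (min t 1)) ((2 : ℂ)⁻¹ • (F + star F)) *
            cfc (fun t : ℝ => max (-1) (min t 1)) ((2 : ℂ)⁻¹ • (F + star F)) - 1)
          : H →L[ℂ] H) ∧
    IsCompactOperator
        (H₀ * cfc (fun t : ℝ => max (-1) (min t 1)) ((2 : ℂ)⁻¹ • (F + star F)) -
            cfc (fun t : ℝ => max (-1) (min t 1)) ((2 : ℂ)⁻¹ • (F + star F)) * H₀
          : H →L[ℂ] H) := by
  set A : H →L[ℂ] H := (2 : ℂ)⁻¹ • (F + star F) with hAdef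
  have hA : IsSelfAdjoint A := by
    rw [hAdef, IsSelfAdjoint]
    simp [star_smul, add_comm]
  set C : H →L[ℂ] H := cfc (fun t : ℝ => max (-1) (min t 1)) A with hCdef
  -- commutator of H₀ with A is compact
  have hcomm : IsCompactOperator (H₀ * A - A * H₀ : H →L[ℂ] H) := by
    have key : H₀*((2:ℂ)⁻¹ • (F + star F)) - ((2:ℂ)⁻¹ • (F + star F))*H₀
        = (2:ℂ)⁻¹ • ((H₀ * F - F * H₀) + (H₀ * star F - star F * H₀)) := by
      rw [mul_smul_comm, smul_mul_assoc, ← smul_sub]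
      congr 1
      noncomm_ring
    rw [hAdef, key]
    exact (h1.add h2).smul _
  -- H₀ (A² − 1) compact
  have hsq : IsCompactOperator (H₀ * (A*A - 1) : H →L[ℂ] H) := by
    have keyB : H₀*((F + star F)*(F + star F) - 4) =
        (H₀*(F*F-1)) + (H₀*(F*F-1)) + (H₀*(F*F-1)) + (H₀*(F*F-1))
        + (H₀*(star F-F))*F + (H₀*(star F-F))*(star F) + F*(H₀*(star F-F)) + F*(H₀*(star F-F))
        + (H₀*F - F*H₀)*(star F-F) + (H₀*F - F*H₀)*(star F-F) := by noncomm_ring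
    have hKB : IsCompactOperator (H₀*((F + star F)*(F + star F) - 4) : H →L[ℂ] H) := by
      rw [keyB]
      exact ((((((((h3.add h3).add h3).add h3).add (h4.comp_clm F)).add
        (h4.comp_clm (star F))).add (h4.clm_comp F)).add (h4.clm_comp F)).add
        (h1.comp_clm (star F - F))).add (h1.comp_clm (star F - F))
    have key : H₀*(((2:ℂ)⁻¹ • (F + star F))*((2:ℂ)⁻¹ • (F + star F)) - 1)
        = (4:ℂ)⁻¹ • (H₀*((F + star F)*(F + star F) - 4)) := by
      have e1 : ((2:ℂ)⁻¹ • (F + star F))*((2:ℂ)⁻¹ • (F + star F))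
          = (4:ℂ)⁻¹ • ((F + star F)*(F + star F)) := by
        rw [smul_mul_smul_comm]; norm_num
      have e2 : (1 : H →L[ℂ] H) = (4:ℂ)⁻¹ • (4 : H →L[ℂ] H) := by
        rw [show (4 : H →L[ℂ] H) = (4:ℂ) • 1 from by
          rw [← Algebra.algebraMap_eq_smul_one, map_ofNat]]
        rw [smul_smul]; norm_num
      rw [e1]
      nth_rewrite 1 [e2]
      rw [← smul_sub, mul_smul_comm]
    rw [hAdef, key]
    exact hKB.smul _
  have hleft : IsCompactOperator (H₀ * (C - A) : H →L[ℂ] H) :=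
    stmt16_left H₀ A hA hcomm hsq
  refine ⟨?_, ?_, ?_⟩
  · -- H₀ (C − F)
    have hAF : IsCompactOperator (H₀ * (A - F) : H →L[ℂ] H) := by
      have e : A - F = (2:ℂ)⁻¹ • (star F - F) := by
        rw [hAdef]; module
      rw [e, mul_smul_comm]
      exact h4.smul _
    have key : H₀ * (C - F) = H₀ * (C - A) + H₀ * (A - F) := by noncomm_ring
    rw [key]
    exact hleft.add hAF
  · -- H₀ (C² − 1)
    have hAC : A * C = C * A := by
      have := cfc_commute_cfc (id : ℝ → ℝ) (fun t : ℝ => max (-1) (min t 1)) A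
      rw [cfc_id ℝ A] at this
      exact this
    have key : H₀*(C*C - 1)
        = (H₀*(C-A))*(C+A) + H₀*(A*A-1) + H₀*(A*C - C*A) := by noncomm_ring
    rw [key, hAC, sub_self, mul_zero, add_zero]
    exact ((hleft.comp_clm (C + A)).add hsq)
  · -- [H₀, C]
    exact stmt16_comm H₀ A hA hcomm _
      (continuous_const.max (continuous_id.min continuous_const))
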